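/- Let A ⊆ ℝⁿ be a nonempty closed set and y ∈ ∂A. If the convex hull co N_A(y) of the limiting normal cone to A at y is pointed, then the Clarke tangent cone to A at y has nonempty interior: int T_A(y) ≠ ∅. -/

import Mathlib

open Set MeasureTheory Filter Topology Metric
open scoped RealInnerProductSpace

noncomputable section

variable {H : Type*} [NormedAddCommGroup H] [InnerProductSpace ℝ H]

/-- The Clarke tangent cone to `A` at `x`. -/
def clarkeTangentCone (A : Set H) (x : H) : Set H :=
  {ξ | ∀ (xs : ℕ → H) (ts : ℕ → ℝ), (∀ i, xs i ∈ A) → Tendsto xs atTop (𝓝 x) →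
      (∀ i, 0 < ts i) → Tendsto ts atTop (𝓝 0) →
      ∃ as : ℕ → H, (∀ i, as i ∈ A) ∧
        Tendsto (fun i => (ts i)⁻¹ • (as i - xs i)) atTop (𝓝 ξ)}

/-- The proximal normal cone to `A` at `x`. -/
def proxNormalCone (A : Set H) (x : H) : Set H :=
  {η | ∃ M > 0, ∀ y ∈ A, ⟪η, y - x⟫ ≤ M * ‖y - x‖ ^ 2}

/-- The limiting normal cone to `A` at `x`. -/
def limitingNormalCone (A : Set H) (x : H) : Set H :=
  {η | ∃ xs ηs : ℕ → H, (∀ i, xs i ∈ A) ∧ (∀ i, ηs i ∈ proxNormalCone A (xs i)) ∧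
    Tendsto xs atTop (𝓝 x) ∧ Tendsto ηs atTop (𝓝 η)}

/-- A set `K` is a pointed cone if `d₁ + d₂ ≠ 0` for every two nonzero elements of `K`. -/
def IsPointedCone (K : Set H) : Prop :=
  ∀ d₁ ∈ K, ∀ d₂ ∈ K, d₁ ≠ 0 → d₂ ≠ 0 → d₁ + d₂ ≠ 0

lemma smul_mem_proxNormalCone {A : Set H} {x η : H} {c : ℝ} (hc : 0 < c)
    (h : η ∈ proxNormalCone A x) : c • η ∈ proxNormalCone A x := by
  obtain ⟨M, hM, h⟩ := h
  refine ⟨c * M, by positivity, fun y hy => ?_⟩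
  rw [real_inner_smul_left]
  calc c * ⟪η, y - x⟫ ≤ c * (M * ‖y - x‖ ^ 2) := by
        exact mul_le_mul_of_nonneg_left (h y hy) hc.le
    _ = c * M * ‖y - x‖ ^ 2 := by ring

lemma smul_mem_limitingNormalCone {A : Set H} {x η : H} {c : ℝ} (hc : 0 < c)
    (h : η ∈ limitingNormalCone A x) : c • η ∈ limitingNormalCone A x := by
  obtain ⟨xs, ηs, h1, h2, h3, h4⟩ := h
  exact ⟨xs, fun i => c • ηs i, h1, fun i => smul_mem_proxNormalCone hc (h2 i), h3,
    (h4.const_smul c)⟩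

lemma isClosed_limitingNormalCone (A : Set H) (x : H) :
    IsClosed (limitingNormalCone A x) := by
  rw [← isSeqClosed_iff_isClosed]
  intro ηk η hηk hlim
  choose xs ηs hxsA hηsP hxst hηst using hηk
  have hev : ∀ k : ℕ, ∃ i, dist (xs k i) x < 1 / (k + 1) ∧ dist (ηs k i) (ηk k) < 1 / (k + 1) := by
    intro k
    have h1 : ∀ᶠ i in atTop, dist (xs k i) x < 1 / (k + 1) :=
      (tendsto_iff_dist_tendsto_zero.1 (hxst k)).eventually_lt_const (by positivity)
    have h2 : ∀ᶠ i in atTop, dist (ηs k i) (ηk k) < 1 / (k + 1) :=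
      (tendsto_iff_dist_tendsto_zero.1 (hηst k)).eventually_lt_const (by positivity)
    exact (h1.and h2).exists
  choose idx hidx1 hidx2 using hev
  refine ⟨fun k => xs k (idx k), fun k => ηs k (idx k), fun k => hxsA k (idx k),
    fun k => hηsP k (idx k), ?_, ?_⟩
  · rw [tendsto_iff_dist_tendsto_zero]
    exact squeeze_zero (fun k => dist_nonneg) (fun k => (hidx1 k).le)
      tendsto_one_div_add_atTop_nhds_zero_nat
  · rw [tendsto_iff_dist_tendsto_zero]
    refine squeeze_zero (fun k => dist_nonneg)
      (fun k => (dist_triangle _ (ηk k) η).trans (add_le_add (hidx2 k).le le_rfl)) ?_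
    have : Tendsto (fun k : ℕ => dist (ηk k) η) atTop (𝓝 0) :=
      tendsto_iff_dist_tendsto_zero.1 hlim
    simpa using tendsto_one_div_add_atTop_nhds_zero_nat.add this

lemma sub_proj_mem_proxNormalCone {A : Set H} {p z : H} (hz : z ∈ A)
    (hd : infDist p A = dist p z) : p - z ∈ proxNormalCone A z := by
  refine ⟨1, one_pos, fun a ha => ?_⟩
  have h1 : dist p z ≤ dist p a := hd ▸ infDist_le_dist_of_mem ha
  have h2 : ‖p - z‖ ≤ ‖p - a‖ := by rwa [dist_eq_norm, dist_eq_norm] at h1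
  have h3 : ‖p - a‖ ^ 2 = ‖p - z‖ ^ 2 - 2 * ⟪p - z, a - z⟫ + ‖a - z‖ ^ 2 := by
    have : p - a = (p - z) - (a - z) := by abel
    rw [this, norm_sub_sq_real]
  nlinarith [sq_nonneg ‖a - z‖, norm_nonneg (p - z), norm_nonneg (p - a)]

lemma isCompact_convexHull_of_isCompact {n : ℕ} {S : Set (EuclideanSpace ℝ (Fin n))}
    (hS : IsCompact S) (hSne : S.Nonempty) : IsCompact (convexHull ℝ S) := by
  classical
  obtain ⟨s₀, hs₀⟩ := hSne
  set m := n + 1 with hm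
  have hcont : Continuous
      (fun p : (Fin m → ℝ) × (Fin m → EuclideanSpace ℝ (Fin n)) => ∑ i, p.1 i • p.2 i) := by
    apply continuous_finset_sum
    intro i _
    exact ((continuous_apply i).comp continuous_fst).smul
      ((continuous_apply i).comp continuous_snd)
  have hdom : IsCompact ((stdSimplex ℝ (Fin m)) ×ˢ
      Set.univ.pi fun _ : Fin m => S) :=
    (isCompact_stdSimplex ℝ _).prod (isCompact_univ_pi fun _ => hS)
  have himage : convexHull ℝ S =
      (fun p : (Fin m → ℝ) × (Fin m → EuclideanSpace ℝ (Fin n)) => ∑ i, p.1 i • p.2 i) ''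
        ((stdSimplex ℝ (Fin m)) ×ˢ Set.univ.pi fun _ : Fin m => S) := by
    apply Subset.antisymm
    · intro x hx
      obtain ⟨ι, hfin, z, w, hzS, hai, hwpos, hwsum, hx⟩ :=
        eq_pos_convex_span_of_mem_convexHull hx
      have hcard : Fintype.card ι ≤ m := by
        have h1 := hai.card_le_finrank_succ
        have h2 : Module.finrank ℝ ↥(vectorSpan ℝ (Set.range z)) ≤ n := by
          have := Submodule.finrank_le (vectorSpan ℝ (Set.range z))
          rwa [finrank_euclideanSpace_fin] at this
        omega
      obtain ⟨f⟩ : Nonempty (ι ↪ Fin m) := by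
        apply Function.Embedding.nonempty_of_card_le
        simpa using hcard
      have hw'f : ∀ i, Function.extend (⇑f) w 0 (f i) = w i :=
        fun i => f.injective.extend_apply _ _ _
      have hz'f : ∀ i, Function.extend (⇑f) z (fun _ => s₀) (f i) = z i :=
        fun i => f.injective.extend_apply _ _ _
      have hw'0 : ∀ j, j ∉ Finset.univ.image f → Function.extend (⇑f) w 0 j = 0 := by
        intro j hj
        rw [Function.extend_apply']
        · rfl
        · rintro ⟨i, rfl⟩
          exact hj (Finset.mem_image_of_mem f (Finset.mem_univ i))
      have hsum1 : ∑ j, Function.extend (⇑f) w 0 j = 1 := by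
        rw [← Finset.sum_subset (Finset.subset_univ (Finset.univ.image f))
          (fun j _ hj => hw'0 j hj)]
        rw [Finset.sum_image (fun a _ b _ h => f.injective h)]
        simpa [hw'f] using hwsum
      have hsum2 : ∑ j, Function.extend (⇑f) w 0 j • Function.extend (⇑f) z (fun _ => s₀) j
          = x := by
        rw [← Finset.sum_subset (Finset.subset_univ (Finset.univ.image f))
          (fun j _ hj => by rw [hw'0 j hj, zero_smul])]
        rw [Finset.sum_image (fun a _ b _ h => f.injective h)]
        simp only [hw'f, hz'f]
        exact hx
      refine ⟨(Function.extend (⇑f) w 0, Function.extend (⇑f) z (fun _ => s₀)),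
        ⟨⟨?_, hsum1⟩, ?_⟩, hsum2⟩
      · intro j
        by_cases hj : j ∈ Finset.univ.image f
        · obtain ⟨i, _, rfl⟩ := Finset.mem_image.1 hj
          show (0:ℝ) ≤ Function.extend (⇑f) w 0 (f i)
          rw [hw'f]
          exact (hwpos i).le
        · show (0:ℝ) ≤ Function.extend (⇑f) w 0 j
          rw [hw'0 j hj]
      · intro j _
        show Function.extend (⇑f) z (fun _ => s₀) j ∈ S
        by_cases hj : ∃ i, f i = j
        · obtain ⟨i, rfl⟩ := hj
          rw [hz'f]
          exact hzS ⟨i, rfl⟩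
        · rw [Function.extend_apply' _ _ _ hj]
          exact hs₀
    · rintro x ⟨⟨w, z⟩, ⟨⟨hw0, hwsum⟩, hz⟩, rfl⟩
      exact (convex_convexHull ℝ S).sum_mem (fun i _ => hw0 i) hwsum
        (fun i _ => subset_convexHull ℝ S (hz i (Set.mem_univ i)))
  rw [himage]
  exact hdom.image hcont

lemma zero_not_mem_hull {n : ℕ} {A : Set (EuclideanSpace ℝ (Fin n))}
    {y : EuclideanSpace ℝ (Fin n)}
    (hpointed : ∀ d₁ ∈ convexHull ℝ (limitingNormalCone A y),
      ∀ d₂ ∈ convexHull ℝ (limitingNormalCone A y), d₁ ≠ 0 → d₂ ≠ 0 → d₁ + d₂ ≠ 0) :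
    (0 : EuclideanSpace ℝ (Fin n)) ∉
      convexHull ℝ (limitingNormalCone A y ∩ sphere 0 1) := by
  classical
  intro h0
  set N := limitingNormalCone A y
  obtain ⟨ι, hfin, z, w, hzS, hai, hwpos, hwsum, hzero⟩ :=
    eq_pos_convex_span_of_mem_convexHull h0
  have hzN : ∀ i, z i ∈ N := fun i => (hzS ⟨i, rfl⟩).1
  have hznorm : ∀ i, ‖z i‖ = 1 := fun i => by
    have := (hzS ⟨i, rfl⟩).2
    rwa [mem_sphere_zero_iff_norm] at this
  have hne : Nonempty ι := by
    by_contra h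
    rw [not_nonempty_iff] at h
    rw [Finset.sum_eq_zero (fun i _ => (h.elim i))] at hwsum
    norm_num at hwsum
  obtain ⟨j⟩ := hne
  set d₁ : EuclideanSpace ℝ (Fin n) := w j • z j with hd₁def
  have hd₁N : d₁ ∈ N := smul_mem_limitingNormalCone (hwpos j) (hzN j)
  have hd₁ne : d₁ ≠ 0 := by
    rw [hd₁def]
    intro h
    rcases smul_eq_zero.1 h with h | h
    · exact (hwpos j).ne' h
    · have h2 := hznorm j
      rw [h, norm_zero] at h2
      exact one_ne_zero h2.symm
  set d₂ : EuclideanSpace ℝ (Fin n) := ∑ i ∈ Finset.univ.erase j, w i • z i with hd₂def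
  have hsplit : d₁ + d₂ = 0 :=
    (Finset.add_sum_erase _ (fun i => w i • z i) (Finset.mem_univ j)).trans hzero
  have hd₂ne : d₂ ≠ 0 := by
    intro h
    rw [h, add_zero] at hsplit
    exact hd₁ne hsplit
  have herasene : (Finset.univ.erase j).Nonempty := by
    by_contra h
    rw [Finset.not_nonempty_iff_eq_empty] at h
    rw [hd₂def, h, Finset.sum_empty] at hd₂ne
    exact hd₂ne rfl
  set s₀ : ℝ := ∑ i ∈ Finset.univ.erase j, w i with hs₀def
  have hs₀pos : 0 < s₀ := by
    obtain ⟨i, hi⟩ := herasene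
    exact Finset.sum_pos' (fun i _ => (hwpos i).le) ⟨i, hi, hwpos i⟩
  have hd₂mem : d₂ ∈ convexHull ℝ N := by
    have : d₂ = ∑ i ∈ Finset.univ.erase j, (w i / s₀) • (s₀ • z i) := by
      rw [hd₂def]
      refine Finset.sum_congr rfl fun i _ => ?_
      rw [smul_smul, div_mul_cancel₀ _ hs₀pos.ne']
    rw [this]
    refine (convex_convexHull ℝ N).sum_mem (fun i _ => div_nonneg (hwpos i).le hs₀pos.le) ?_ ?_
    · rw [← Finset.sum_div, ← hs₀def, div_self hs₀pos.ne']
    · exact fun i _ => subset_convexHull ℝ N (smul_mem_limitingNormalCone hs₀pos (hzN i))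
  exact hpointed d₁ (subset_convexHull ℝ N hd₁N) d₂ hd₂mem hd₁ne hd₂ne hsplit

lemma exists_sep_vector {n : ℕ} {A : Set (EuclideanSpace ℝ (Fin n))}
    {y : EuclideanSpace ℝ (Fin n)} (hn : 0 < n)
    (hpointed : ∀ d₁ ∈ convexHull ℝ (limitingNormalCone A y),
      ∀ d₂ ∈ convexHull ℝ (limitingNormalCone A y), d₁ ≠ 0 → d₂ ≠ 0 → d₁ + d₂ ≠ 0) :
    ∃ v : EuclideanSpace ℝ (Fin n), ‖v‖ = 1 ∧ ∃ ε : ℝ, 0 < ε ∧ ε ≤ 1/2 ∧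
      ∀ η ∈ limitingNormalCone A y, ‖η‖ = 1 → ⟪η, v⟫ ≤ -(2*ε) := by
  classical
  set N := limitingNormalCone A y with hN
  set S := N ∩ sphere 0 1 with hS
  by_cases hSne : S.Nonempty
  · have hScpt : IsCompact S :=
      (isCompact_sphere (0 : EuclideanSpace ℝ (Fin n)) 1).inter_left
        (isClosed_limitingNormalCone A y)
    have hKcpt : IsCompact (convexHull ℝ S) := isCompact_convexHull_of_isCompact hScpt hSne
    have h0 : (0 : EuclideanSpace ℝ (Fin n)) ∉ convexHull ℝ S := zero_not_mem_hull hpointed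
    obtain ⟨f, u, hfu, hu0⟩ :=
      geometric_hahn_banach_closed_point (convex_convexHull ℝ S) hKcpt.isClosed h0
    rw [map_zero] at hu0
    set v₀ := (InnerProductSpace.toDual ℝ (EuclideanSpace ℝ (Fin n))).symm f with hv₀
    have hv₀app : ∀ x, ⟪v₀, x⟫ = f x := fun x => InnerProductSpace.toDual_symm_apply
    have hv₀ne : v₀ ≠ 0 := by
      obtain ⟨a₀, ha₀⟩ := hSne
      intro h
      have h1 : f a₀ < u := hfu a₀ (subset_convexHull ℝ S ha₀)
      have h2 : ⟪v₀, a₀⟫ = f a₀ := hv₀app a₀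
      rw [h, inner_zero_left] at h2
      linarith
    set c := ‖v₀‖ with hc
    have hcpos : 0 < c := norm_pos_iff.2 hv₀ne
    refine ⟨c⁻¹ • v₀, norm_smul_inv_norm hv₀ne, min (-u / (2 * c)) (1/2), ?_, min_le_right _ _, ?_⟩
    · apply lt_min
      · exact div_pos (by linarith) (by positivity)
      · norm_num
    · intro η hηN hηnorm
      have hηS : η ∈ S := ⟨hηN, by rwa [mem_sphere_zero_iff_norm]⟩
      have h1 : f η < u := hfu η (subset_convexHull ℝ S hηS)
      have h2 : ⟪η, c⁻¹ • v₀⟫ = c⁻¹ * f η := by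
        rw [real_inner_comm, real_inner_smul_left, hv₀app]
      rw [h2]
      have h3 : min (-u / (2 * c)) (1/2) ≤ -u / (2 * c) := min_le_left _ _
      have h4 : min (-u / (2 * c)) (1/2) * (2 * c) ≤ -u := by
        rwa [← le_div_iff₀ (by positivity)]
      have h5 : c⁻¹ * f η ≤ c⁻¹ * u := by
        apply mul_le_mul_of_nonneg_left h1.le (by positivity)
      have h6 : c⁻¹ * u ≤ -(2 * min (-u / (2 * c)) (1/2)) := by
        rw [inv_mul_eq_div, div_le_iff₀ hcpos]
        nlinarith
      linarith
  · refine ⟨EuclideanSpace.single (⟨0, hn⟩ : Fin n) (1:ℝ), ?_, 1/2, by norm_num, le_refl _, ?_⟩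
    · rw [EuclideanSpace.norm_single, norm_one]
    · intro η hηN hηnorm
      exact absurd ⟨hηN, by rwa [mem_sphere_zero_iff_norm]⟩ (fun h => hSne ⟨η, h⟩)

lemma exists_delta_prox {n : ℕ} {A : Set (EuclideanSpace ℝ (Fin n))}
    {y v : EuclideanSpace ℝ (Fin n)} {ε : ℝ} (hε : 0 < ε)
    (hsep : ∀ η ∈ limitingNormalCone A y, ‖η‖ = 1 → ⟪η, v⟫ ≤ -(2*ε)) :
    ∃ δ > 0, ∀ x ∈ A, dist x y < δ → ∀ η ∈ proxNormalCone A x, ⟪η, v⟫ ≤ -ε * ‖η‖ := by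
  classical
  have hunit : ∃ δ > 0, ∀ x ∈ A, dist x y < δ →
      ∀ η ∈ proxNormalCone A x, ‖η‖ = 1 → ⟪η, v⟫ ≤ -ε := by
    by_contra h
    push_neg at h
    have hbad : ∀ k : ℕ, ∃ x, x ∈ A ∧ dist x y < 1/(k+1) ∧
        ∃ η, η ∈ proxNormalCone A x ∧ ‖η‖ = 1 ∧ -ε < ⟪η, v⟫ := by
      intro k
      obtain ⟨x, hxA, hxd, η, hηP, hηn, hηv⟩ := h (1/(k+1)) (by positivity)
      exact ⟨x, hxA, hxd, η, hηP, hηn, hηv⟩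
    choose xk hxkA hxkd ηk hηkP hηkn hηkv using hbad
    have hηsphere : ∀ k, ηk k ∈ sphere (0 : EuclideanSpace ℝ (Fin n)) 1 :=
      fun k => by rw [mem_sphere_zero_iff_norm]; exact hηkn k
    obtain ⟨η, hηmem, φ, hφmono, hφtend⟩ :=
      (isCompact_sphere (0 : EuclideanSpace ℝ (Fin n)) 1).tendsto_subseq hηsphere
    have hxtend : Tendsto (fun k => xk (φ k)) atTop (𝓝 y) := by
      rw [tendsto_iff_dist_tendsto_zero]
      refine squeeze_zero (fun k => dist_nonneg) (fun k => ?_)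
        tendsto_one_div_add_atTop_nhds_zero_nat
      calc dist (xk (φ k)) y ≤ 1/(φ k + 1) := (hxkd (φ k)).le
        _ ≤ 1/(k+1) := by
            apply one_div_le_one_div_of_le (by positivity)
            have h1 : k ≤ φ k := hφmono.le_apply
            have h2 : (k : ℝ) ≤ (φ k : ℝ) := Nat.cast_le.2 h1
            linarith
    have hηN : η ∈ limitingNormalCone A y :=
      ⟨fun k => xk (φ k), fun k => ηk (φ k), fun k => hxkA (φ k), fun k => hηkP (φ k),
        hxtend, hφtend⟩
    have h1 : ⟪η, v⟫ ≤ -(2*ε) := hsep η hηN (by rwa [← mem_sphere_zero_iff_norm])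
    have h2 : -ε ≤ ⟪η, v⟫ := by
      have hcont : Tendsto (fun k => ⟪ηk (φ k), v⟫) atTop (𝓝 ⟪η, v⟫) :=
        hφtend.inner tendsto_const_nhds
      exact ge_of_tendsto hcont (Eventually.of_forall fun k => (hηkv (φ k)).le)
    linarith
  obtain ⟨δ, hδ, hδu⟩ := hunit
  refine ⟨δ, hδ, fun x hxA hxd η hηP => ?_⟩
  rcases eq_or_ne η 0 with rfl | hηne
  · simp
  · have hηpos : 0 < ‖η‖ := norm_pos_iff.2 hηne
    have hmem : ‖η‖⁻¹ • η ∈ proxNormalCone A x :=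
      smul_mem_proxNormalCone (by positivity) hηP
    have hn1 : ‖(‖η‖⁻¹ • η)‖ = 1 := norm_smul_inv_norm hηne
    have := hδu x hxA hxd _ hmem hn1
    rw [real_inner_smul_left] at this
    have h2 : ⟪η, v⟫ ≤ -ε * ‖η‖ := by
      rw [inv_mul_le_iff₀ hηpos] at this
      linarith [this]
    exact h2

lemma slope_arith {a b d eps th r : ℝ} (ha : th ≤ a) (hth : 0 < th) (heps : 0 < eps)
    (hd : 0 < d) (hdlt : d < eps * th / 8) (hb0 : 0 ≤ b)
    (hb2 : b ^ 2 ≤ a ^ 2 - eps * d * a + 4 * d ^ 2) (hr : -eps / 4 < r) :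
    (b - a) / d < r := by
  have ha0 : 0 < a := lt_of_lt_of_le hth ha
  have hda : d * th ≤ d * a := mul_le_mul_of_nonneg_left ha hd.le
  have h4d : 4 * d ^ 2 ≤ eps * d * a / 2 := by nlinarith
  have hba : b ≤ a := by nlinarith
  have h1 : (a - b) * (a + b) ≥ eps * d * a / 2 := by nlinarith
  have h2 : a - b ≥ eps * d / 4 := by nlinarith [mul_le_mul_of_nonneg_left (show a + b ≤ 2 * a by linarith) (show (0:ℝ) ≤ a - b by linarith)]
  rw [div_lt_iff₀ hd]
  nlinarith

set_option maxHeartbeats 1000000 in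
lemma flow_mem {n : ℕ} {A : Set (EuclideanSpace ℝ (Fin n))} (hA : IsClosed A)
    (hAne : A.Nonempty) {y v : EuclideanSpace ℝ (Fin n)} {ε δ : ℝ}
    (hε : 0 < ε) (hε2 : ε ≤ 1/2) (hδ : 0 < δ)
    (hprox : ∀ x ∈ A, dist x y < δ → ∀ η ∈ proxNormalCone A x, ⟪η, v⟫ ≤ -ε * ‖η‖)
    {w : EuclideanSpace ℝ (Fin n)} (hwv : ‖w - v‖ ≤ ε/2) (hv : ‖v‖ = 1)
    {x : EuclideanSpace ℝ (Fin n)} (hxA : x ∈ A) (hxy : dist x y < δ/8)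
    {t : ℝ} (ht0 : 0 ≤ t) (htT : t ≤ δ/16) :
    x + t • w ∈ A := by
  have hwnorm : ‖w‖ ≤ 2 := by
    calc ‖w‖ = ‖v + (w - v)‖ := by rw [add_sub_cancel]
      _ ≤ ‖v‖ + ‖w - v‖ := norm_add_le _ _
      _ ≤ 1 + ε/2 := by rw [hv]; linarith
      _ ≤ 2 := by linarith
  set f : ℝ → ℝ := fun s => infDist (x + s • w) A with hf
  have hf0 : f 0 = 0 := by
    simp only [hf, zero_smul, add_zero]
    exact infDist_zero_of_mem hxA
  have hfnonneg : ∀ s, 0 ≤ f s := fun s => infDist_nonneg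
  have hfcont : Continuous f := by
    apply (continuous_infDist_pt A).comp
    continuity
  have hlip : ∀ s s' : ℝ, s ≤ s' → f s' - f s ≤ (s' - s) * ‖w‖ := by
    intro s s' hss
    have h1 : f s' ≤ f s + dist (x + s' • w) (x + s • w) := infDist_le_infDist_add_dist
    have h2 : dist (x + s' • w) (x + s • w) = (s' - s) * ‖w‖ := by
      rw [dist_eq_norm]
      have : x + s' • w - (x + s • w) = (s' - s) • w := by
        rw [sub_smul]; abel
      rw [this, norm_smul, Real.norm_eq_abs, abs_of_nonneg (by linarith)]
    linarith
  have hbound : ∀ s ∈ Icc (0:ℝ) (δ/16), f s ≤ δ/8 := by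
    intro s hs
    have h1 : f s ≤ dist (x + s • w) x := infDist_le_dist_of_mem hxA
    have h2 : dist (x + s • w) x = s * ‖w‖ := by
      rw [dist_eq_norm, add_sub_cancel_left, norm_smul, Real.norm_eq_abs,
        abs_of_nonneg hs.1]
    have : s * ‖w‖ ≤ s * 2 := mul_le_mul_of_nonneg_left hwnorm hs.1
    have hs2 := hs.2
    linarith
  have hmain : ∀ θ : ℝ, 0 < θ → ∀ s ∈ Icc (0:ℝ) (δ/16), f s ≤ θ := by
    intro θ hθ
    have := image_le_of_liminf_slope_right_lt_deriv_boundary (f := f)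
      (f' := fun s => if θ ≤ f s then -ε/4 else 3) (a := 0) (b := δ/16)
      (B := fun _ => θ) (B' := fun _ => 0) (hfcont.continuousOn)
      ?_ (by rw [hf0]; exact hθ.le) (fun _ => hasDerivAt_const _ _) ?_
    · exact fun s hs => this hs
    · -- slope condition
      intro τ hτ r hr
      replace hr : (if θ ≤ f τ then -ε/4 else 3) < r := hr
      by_cases hτθ : θ ≤ f τ
      · rw [if_pos hτθ] at hr
        -- projection point
        obtain ⟨z₀, hz₀A, hz₀d⟩ := hA.exists_infDist_eq_dist hAne (x + τ • w)
        set η := x + τ • w - z₀ with hη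
        have hηnorm : ‖η‖ = f τ := by
          rw [hη, ← dist_eq_norm]; exact hz₀d.symm
        have hz₀y : dist z₀ y < δ := by
          have h1 : dist z₀ (x + τ • w) = f τ := by rw [dist_comm]; exact hz₀d.symm
          have h2 : dist (x + τ • w) x = τ * ‖w‖ := by
            rw [dist_eq_norm, add_sub_cancel_left, norm_smul, Real.norm_eq_abs,
              abs_of_nonneg hτ.1]
          have h3 : f τ ≤ δ/8 := hbound τ ⟨hτ.1, hτ.2.le⟩
          have h4 : τ * ‖w‖ ≤ τ * 2 := mul_le_mul_of_nonneg_left hwnorm hτ.1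
          have h5 := hτ.2
          calc dist z₀ y ≤ dist z₀ (x + τ • w) + dist (x + τ • w) x + dist x y :=
                dist_triangle4 _ _ _ _
            _ < δ := by rw [h1, h2]; linarith
        have hηP : η ∈ proxNormalCone A z₀ := sub_proj_mem_proxNormalCone hz₀A hz₀d
        have hηv : ⟪η, v⟫ ≤ -ε * ‖η‖ := hprox z₀ hz₀A hz₀y η hηP
        have hηw : ⟪η, w⟫ ≤ -(ε/2) * ‖η‖ := by
          have h1 : ⟪η, w⟫ = ⟪η, v⟫ + ⟪η, w - v⟫ := by
            rw [← inner_add_right]; congr 1; abel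
          have h2 : ⟪η, w - v⟫ ≤ ‖η‖ * ‖w - v‖ := real_inner_le_norm _ _
          have h3 : ‖η‖ * ‖w - v‖ ≤ ‖η‖ * (ε/2) :=
            mul_le_mul_of_nonneg_left hwv (norm_nonneg _)
          rw [h1]
          linarith
        -- eventually small slope
        have hev : ∀ᶠ z' in 𝓝[>] τ, slope f τ z' < r := by
          filter_upwards [Ioo_mem_nhdsGT_of_mem
            (Set.mem_Ico.2 ⟨le_refl τ, lt_add_of_pos_right τ
              (show (0:ℝ) < ε * θ / 8 by positivity)⟩)] with z' hz'
          obtain ⟨hz'1, hz'2⟩ := hz'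
          set d := z' - τ with hd
          have hd0 : 0 < d := by simp only [hd]; linarith
          have hdlt : d < ε * θ / 8 := by simp only [hd]; linarith
          have hstep : f z' ≤ ‖η + d • w‖ := by
            have h1 : f z' ≤ dist (x + z' • w) z₀ := infDist_le_dist_of_mem hz₀A
            have h2 : x + z' • w - z₀ = η + d • w := by
              rw [hη, hd, sub_smul]; abel
            rw [dist_eq_norm, h2] at h1
            exact h1
          have hsq : ‖η + d • w‖ ^ 2 = ‖η‖ ^ 2 + 2 * (d * ⟪η, w⟫) + d ^ 2 * ‖w‖ ^ 2 := by
            rw [norm_add_sq_real, real_inner_smul_right, norm_smul, Real.norm_eq_abs,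
              mul_pow, sq_abs]
          have hfz2 : f z' ^ 2 ≤ f τ ^ 2 - ε * d * f τ + 4 * d ^ 2 := by
            have h1 : f z' ^ 2 ≤ ‖η + d • w‖ ^ 2 :=
              pow_le_pow_left₀ (hfnonneg z') hstep 2
            have hw4 : ‖w‖ ^ 2 ≤ 4 := by nlinarith [norm_nonneg w]
            have h2 : d ^ 2 * ‖w‖ ^ 2 ≤ 4 * d ^ 2 := by nlinarith [sq_nonneg d]
            have h3 : d * ⟪η, w⟫ ≤ d * (-(ε / 2) * ‖η‖) :=
              mul_le_mul_of_nonneg_left hηw hd0.le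
            rw [hηnorm] at h3 hsq
            rw [hsq] at h1
            have h4 : 2 * (d * ⟪η, w⟫) ≤ -(ε * d * f τ) := by nlinarith [h3]
            linarith
          have := slope_arith hτθ hθ hε hd0 hdlt (hfnonneg z') hfz2 hr
          rwa [slope_def_field]
        exact hev.frequently
      · rw [if_neg hτθ] at hr
        have hev : ∀ᶠ z' in 𝓝[>] τ, slope f τ z' < r := by
          filter_upwards [self_mem_nhdsWithin] with z' hz'
          have hz' : τ < z' := hz'
          rw [slope_def_field, div_lt_iff₀ (by linarith)]
          have h1 : f z' - f τ ≤ (z' - τ) * ‖w‖ := hlip τ z' hz'.le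
          have h2 : (z' - τ) * ‖w‖ ≤ (z' - τ) * 2 :=
            mul_le_mul_of_nonneg_left hwnorm (by linarith)
          nlinarith [h1, h2, hr]
        exact hev.frequently
    · -- boundary condition
      intro τ hτ hfτ
      have hge : θ ≤ f τ := le_of_eq (by simpa using hfτ.symm)
      show (if θ ≤ f τ then -ε/4 else 3) < 0
      rw [if_pos hge]
      linarith
  have hft : f t ≤ 0 := by
    refine le_of_forall_pos_le_add fun θ hθ => ?_
    have := hmain θ hθ t ⟨ht0, htT⟩
    linarith
  have hft0 : f t = 0 := le_antisymm hft (hfnonneg t)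
  exact (hA.mem_iff_infDist_zero hAne).2 hft0

/-- If the convex hull of the limiting normal cone `N_A(y)` is pointed, then the Clarke
tangent cone `T_A(y)` has nonempty interior. -/
theorem interior_clarkeTangentCone_nonempty_of_pointed_limitingNormalCone
    {n : ℕ} (A : Set (EuclideanSpace ℝ (Fin n))) (hA : IsClosed A) (hAne : A.Nonempty)
    (y : EuclideanSpace ℝ (Fin n)) (hy : y ∈ frontier A)
    (hpointed : IsPointedCone (convexHull ℝ (limitingNormalCone A y))) :
    (interior (clarkeTangentCone A y)).Nonempty := by
  classical
  rcases Nat.eq_zero_or_pos n with rfl | hn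
  · exfalso
    haveI : Subsingleton (EuclideanSpace ℝ (Fin 0)) :=
      ⟨fun a b => by ext i; exact i.elim0⟩
    have hAuniv : A = Set.univ := by
      obtain ⟨a, ha⟩ := hAne
      apply Set.eq_univ_of_forall fun z => by rwa [Subsingleton.elim z a]
    rw [hAuniv, frontier_univ] at hy
    exact hy
  obtain ⟨v, hv, ε, hε, hε2, hsep⟩ := exists_sep_vector hn hpointed
  obtain ⟨δ, hδ, hprox⟩ := exists_delta_prox hε hsep
  refine ⟨v, mem_interior.2 ⟨ball v (ε/2), ?_, isOpen_ball,
    mem_ball_self (by positivity)⟩⟩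
  intro w hw
  have hwv : ‖w - v‖ ≤ ε/2 := (mem_ball_iff_norm.1 hw).le
  intro xs ts hxsA hxst hts hts0
  refine ⟨fun i => if dist (xs i) y < δ/8 ∧ ts i ≤ δ/16 then xs i + (ts i) • w else xs i,
    ?_, ?_⟩
  · intro i
    by_cases h : dist (xs i) y < δ/8 ∧ ts i ≤ δ/16
    · show (if dist (xs i) y < δ/8 ∧ ts i ≤ δ/16 then xs i + (ts i) • w else xs i) ∈ A
      rw [if_pos h]
      exact flow_mem hA hAne hε hε2 hδ hprox hwv hv (hxsA i) h.1 (hts i).le h.2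
    · show (if dist (xs i) y < δ/8 ∧ ts i ≤ δ/16 then xs i + (ts i) • w else xs i) ∈ A
      rw [if_neg h]
      exact hxsA i
  · have h1 : ∀ᶠ i in atTop, dist (xs i) y < δ/8 := by
      have := hxst.eventually_mem (Metric.ball_mem_nhds y (show (0:ℝ) < δ/8 by positivity))
      filter_upwards [this] with i hi
      exact mem_ball.1 hi
    have h2 : ∀ᶠ i in atTop, ts i ≤ δ/16 := by
      have := hts0.eventually_mem (Metric.ball_mem_nhds (0:ℝ) (show (0:ℝ) < δ/16 by positivity))
      filter_upwards [this] with i hi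
      have : |ts i| < δ/16 := by rwa [mem_ball_zero_iff, Real.norm_eq_abs] at hi
      exact (le_abs_self _).trans this.le
    apply Tendsto.congr' ?_ (tendsto_const_nhds (x := w))
    filter_upwards [h1, h2] with i hi1 hi2
    show w = (ts i)⁻¹ • ((if dist (xs i) y < δ/8 ∧ ts i ≤ δ/16 then xs i + (ts i) • w else xs i) - xs i)
    rw [if_pos ⟨hi1, hi2⟩]
    have h3 : xs i + ts i • w - xs i = ts i • w := by abel
    rw [h3, smul_smul, inv_mul_cancel₀ (hts i).ne', one_smul]
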